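/- arXiv:0705.0776 — 3 statements merged into one kernel-verified Lean document; each statement's English description precedes it below -/
import Mathlib

section
/- Let T be a computable tree of finite binary strings with at least one infinite path, and let X be the rightmost infinite path through T (i.e., X(m) = 0 if and only if no infinite path through T extends (X ↾ m)⌢1). Then the complement of X is enumeration reducible to X, and moreover this reduction is witnessed by a computably enumerable set C of pairs (m, E) such that m ∉ X if and only if there is a finite set E ⊆ X with (m, E) ∈ C. -/
open Classical in
/-- The characteristic (total) function of a set of naturals, as a partial function. -/
noncomputable def chi (X : Set ℕ) : ℕ →. ℕ :=
  fun n => Part.some (if n ∈ X then 1 else 0)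

/-- Partial functions computable relative to an oracle `O`. -/
inductive RecursiveInOracle (O : ℕ →. ℕ) : (ℕ →. ℕ) → Prop
  | zero : RecursiveInOracle O fun _ => 0
  | succ : RecursiveInOracle O Nat.succ
  | left : RecursiveInOracle O fun n => (Nat.unpair n).1
  | right : RecursiveInOracle O fun n => (Nat.unpair n).2
  | oracle : RecursiveInOracle O O
  | pair {f g : ℕ →. ℕ} : RecursiveInOracle O f → RecursiveInOracle O g →
      RecursiveInOracle O fun n => Nat.pair <$> f n <*> g n
  | comp {f g : ℕ →. ℕ} : RecursiveInOracle O f → RecursiveInOracle O g →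
      RecursiveInOracle O fun n => g n >>= f
  | prec {f g : ℕ →. ℕ} : RecursiveInOracle O f → RecursiveInOracle O g →
      RecursiveInOracle O (Nat.unpaired fun a n =>
        n.rec (f a) fun y IH => do let i ← IH; g (Nat.pair a (Nat.pair y i)))
  | rfind {f : ℕ →. ℕ} : RecursiveInOracle O f →
      RecursiveInOracle O fun a => Nat.rfind fun n => (fun m => m = 0) <$> f (Nat.pair a n)

/-- `X ≤_T Y` : `X` is computable with oracle `Y`. -/
def TuringLE (X Y : Set ℕ) : Prop := RecursiveInOracle (chi Y) (chi X)

/-- `X` is c.e.(`Y`) : `X` is the domain of a partial function computable with oracle `Y`. -/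
def CEIn (Y X : Set ℕ) : Prop := ∃ f : ℕ →. ℕ, RecursiveInOracle (chi Y) f ∧ X = f.Dom

/-- `X` is relatively c.e. -/
def RelativelyCE (X : Set ℕ) : Prop := ∃ Y : Set ℕ, CEIn Y X ∧ ¬ TuringLE X Y

/-- A computably enumerable predicate (unrelativized). -/
def CEPred {α : Type} [Primcodable α] (p : α → Prop) : Prop :=
  ∃ f : α →. Unit, Partrec f ∧ ∀ a, p a ↔ (f a).Dom

/-- `A ≤_e B` : enumeration reducibility. -/
def EnumLE (A B : Set ℕ) : Prop :=
  ∃ C : Set (ℕ × Finset ℕ), CEPred (· ∈ C) ∧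
    ∀ n, n ∈ A ↔ ∃ E : Finset ℕ, ↑E ⊆ B ∧ (n, E) ∈ C

open Classical in
/-- `X ↾ k` : the binary string of the first `k` values of the characteristic function. -/
noncomputable def seg (X : Set ℕ) (k : ℕ) : List Bool :=
  (List.range k).map fun n => decide (n ∈ X)

/-- `X` is 1-generic. -/
def OneGeneric (X : Set ℕ) : Prop :=
  ∀ S : Set (List Bool), CEPred (· ∈ S) →
    (∃ k, seg X k ∈ S) ∨ (∃ k, ∀ σ : List Bool, seg X k <+: σ → σ ∉ S)

/-- `X` is an infinite path through the tree `T`. -/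
def IsPath (T : Set (List Bool)) (X : Set ℕ) : Prop := ∀ k, seg X k ∈ T

/-- `T` is a computable tree of finite binary strings. -/
def ComputableTree (T : Set (List Bool)) : Prop :=
  (∀ σ τ : List Bool, σ ∈ T → τ <+: σ → τ ∈ T) ∧ ComputablePred (· ∈ T)


open Denumerable Encodable

namespace RPE

/-- All binary strings of length `k`. -/
def bitLists : ℕ → List (List Bool) := fun n =>
  Nat.rec [[]] (fun _ ih => ih.flatMap fun l => [false :: l, true :: l]) n

lemma bitLists_succ (k : ℕ) :
    bitLists (k+1) = (bitLists k).flatMap fun l => [false :: l, true :: l] := rfl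

lemma mem_bitLists {k : ℕ} {μ : List Bool} : μ ∈ bitLists k ↔ μ.length = k := by
  induction k generalizing μ with
  | zero => simp [bitLists, List.length_eq_zero_iff]
  | succ k ih =>
    rw [bitLists_succ, List.mem_flatMap]
    cases μ with
    | nil => simp
    | cons b l =>
      simp only [List.mem_cons, List.length_cons, Nat.succ_inj]
      constructor
      · rintro ⟨l', hl', h⟩
        rcases h with h | h | h
        · cases h; exact ih.1 hl'
        · cases h; exact ih.1 hl'
        · cases h
      · intro h
        refine ⟨l, ih.2 h, ?_⟩
        cases b
        · exact Or.inl rfl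
        · exact Or.inr (Or.inl rfl)

lemma primrec_bitLists : Primrec bitLists := by
  apply Primrec.nat_rec₁
  apply Primrec.list_flatMap (Primrec.snd)
  have h1 : Primrec₂ fun (_ : ℕ × List (List Bool)) (l : List Bool) => false :: l :=
    Primrec.list_cons.comp (Primrec.const false) Primrec.snd
  have h2 : Primrec₂ fun (_ : ℕ × List (List Bool)) (l : List Bool) => true :: l :=
    Primrec.list_cons.comp (Primrec.const true) Primrec.snd
  exact Primrec.list_cons.comp h1 (Primrec.list_cons.comp h2 (Primrec.const ([] : List (List Bool))))

/-- computable version of `raise'` -/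
def raiseList (l : List ℕ) : List ℕ :=
  (l.foldl (fun s m => (s.1 ++ [m + s.2], m + s.2 + 1)) ([], 0)).1

lemma foldl_raise' : ∀ (l : List ℕ) (L : List ℕ) (n : ℕ),
    (l.foldl (fun s m => (s.1 ++ [m + s.2], m + s.2 + 1)) (L, n)).1 = L ++ raise' l n
  | [], L, n => by simp [raise']
  | m :: l, L, n => by
    rw [List.foldl_cons, foldl_raise' l (L ++ [m + n]) (m + n + 1), raise']
    simp

lemma raiseList_eq (l : List ℕ) : raiseList l = raise' l 0 := by
  rw [raiseList, foldl_raise']; simp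

lemma primrec_raiseList : Primrec raiseList := by
  have h : Primrec₂ fun (_ : List ℕ) (p : (List ℕ × ℕ) × ℕ) =>
      (p.1.1 ++ [p.2 + p.1.2], p.2 + p.1.2 + 1) := by
    apply Primrec.pair
    · exact Primrec.list_concat.comp (Primrec.fst.comp (Primrec.fst.comp Primrec.snd))
        (Primrec.nat_add.comp (Primrec.snd.comp Primrec.snd)
          (Primrec.snd.comp (Primrec.fst.comp Primrec.snd)))
    · exact Primrec.succ.comp (Primrec.nat_add.comp (Primrec.snd.comp Primrec.snd)
        (Primrec.snd.comp (Primrec.fst.comp Primrec.snd)))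
  exact Primrec.fst.comp
    (Primrec.list_foldl Primrec.id (Primrec.const (([], 0) : List ℕ × ℕ)) h)

lemma mem_finset_iff (E : Finset ℕ) (j : ℕ) :
    j ∈ E ↔ j ∈ raiseList (ofNat (List ℕ) (@encode _ Primcodable.toEncodable E)) := by
  conv_lhs => rw [show E = ofNat (Finset ℕ) (@encode _ Primcodable.toEncodable E) from
    (Denumerable.ofNat_encode E).symm]
  rw [raiseList_eq]
  rw [show ofNat (Finset ℕ) (@encode _ Primcodable.toEncodable E) =
      Finset.map (Denumerable.eqv ℕ).symm.toEmbedding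
        (Denumerable.raise'Finset (ofNat (List ℕ) (@encode _ Primcodable.toEncodable E)) 0) from
    Denumerable.ofNat_of_decode rfl]
  simp only [Finset.mem_map, Denumerable.raise'Finset]
  constructor
  · rintro ⟨x, hx, rfl⟩
    have hx' : x ∈ raise' _ 0 := hx; simpa [Denumerable.eqv] using hx'
  · intro h
    exact ⟨j, by exact h, by simp [Denumerable.eqv]⟩

lemma primrec_list_mem : PrimrecRel fun (j : ℕ) (l : List ℕ) => j ∈ l := by
  have this : Primrec fun p : ℕ × List ℕ => decide (List.idxOf p.1 p.2 < p.2.length) :=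
    Primrec.nat_lt.comp
      (Primrec.list_idxOf.comp Primrec.fst Primrec.snd)
      (Primrec.list_length.comp Primrec.snd) |>.decide
  refine Primrec₂.primrecRel (Primrec.of_eq this ?_)
  rintro ⟨j, l⟩
  simp only []
  rw [decide_eq_decide]
  exact List.idxOf_lt_length_iff

lemma primrec_finset_mem : Primrec₂ fun (E : Finset ℕ) (j : ℕ) => decide (j ∈ E) := by
  have h : Primrec₂ fun (E : Finset ℕ) (j : ℕ) =>
      decide (j ∈ raiseList (ofNat (List ℕ) (@encode _ Primcodable.toEncodable E))) :=
    (primrec_list_mem.comp Primrec.snd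
      (primrec_raiseList.comp ((Primrec.ofNat (List ℕ)).comp (Primrec.encode.comp Primrec.fst)))).decide
  refine Primrec.of_eq h ?_
  rintro ⟨E, j⟩
  simp only []
  rw [decide_eq_decide]
  exact (mem_finset_iff E j).symm

end RPE

namespace RPE

lemma nat_rec_and_eq_true (p : ℕ → Bool) : ∀ n : ℕ,
    (Nat.rec (motive := fun _ => Bool) true (fun i ih => ih && p i) n = true) ↔
      ∀ i < n, p i = true := by
  intro n
  induction n with
  | zero => simp
  | succ n ih =>
    show (Nat.rec (motive := fun _ => Bool) true (fun i ih => ih && p i) n && p n) = true ↔ _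
    rw [Bool.and_eq_true, ih]
    constructor
    · rintro ⟨h1, h2⟩ i hi
      rcases Nat.lt_succ_iff_lt_or_eq.1 hi with h | rfl
      · exact h1 i h
      · exact h2
    · intro h
      exact ⟨fun i hi => h i (hi.trans (Nat.lt_succ_self n)), h n (Nat.lt_succ_self n)⟩

/-- Bounded check that no extension of `ρ` of length `k` is accepted by `d`. -/
def diesB (d : List Bool → Bool) (a : List Bool × ℕ) : Bool :=
  Nat.rec (motive := fun _ => Bool) true
    (fun i ih => ih && !d (a.1 ++ (bitLists a.2).getD i [])) ((bitLists a.2).length)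

lemma diesB_eq_true (d : List Bool → Bool) (ρ : List Bool) (k : ℕ) :
    diesB d (ρ, k) = true ↔ ∀ μ : List Bool, μ.length = k → d (ρ ++ μ) = false := by
  rw [show diesB d (ρ, k) = Nat.rec (motive := fun _ => Bool) true
      (fun i ih => ih && !d (ρ ++ (bitLists k).getD i [])) ((bitLists k).length) from rfl,
    nat_rec_and_eq_true]
  constructor
  · intro h μ hμ
    obtain ⟨i, hi, hgi⟩ := List.mem_iff_getElem.1 (mem_bitLists.2 hμ)
    have := h i hi
    rw [List.getD_eq_getElem _ _ hi, hgi, Bool.not_eq_true'] at this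
    exact this
  · intro h i hi
    rw [List.getD_eq_getElem _ _ hi, Bool.not_eq_true']
    exact h _ (mem_bitLists.1 (List.getElem_mem hi))

lemma computable_diesB {d : List Bool → Bool} (hd : Computable d) : Computable (diesB d) := by
  have harg : Primrec fun q : (List Bool × ℕ) × ℕ × Bool =>
      q.1.1 ++ (bitLists q.1.2).getD q.2.1 [] :=
    Primrec.list_append.comp (Primrec.fst.comp Primrec.fst)
      ((Primrec.list_getD ([] : List Bool)).comp
        (primrec_bitLists.comp (Primrec.snd.comp Primrec.fst))
        (Primrec.fst.comp Primrec.snd))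
  have hnot : Computable fun q : (List Bool × ℕ) × ℕ × Bool =>
      !d (q.1.1 ++ (bitLists q.1.2).getD q.2.1 []) :=
    (Primrec.dom_bool (!·)).to_comp.comp (hd.comp harg.to_comp)
  have hh : Computable₂ fun (a : List Bool × ℕ) (p : ℕ × Bool) =>
      p.2 && !d (a.1 ++ (bitLists a.2).getD p.1 []) :=
    (Primrec.dom_bool₂ (· && ·)).to_comp.comp
      (Primrec.snd.comp Primrec.snd).to_comp hnot
  exact Computable.nat_rec
    (Primrec.list_length.comp (primrec_bitLists.comp Primrec.snd)).to_comp
    (Computable.const true) hh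

/-- The "guessed characteristic string" of length `j` read off from a finite set `E`. -/
def seg' (E : Finset ℕ) (j : ℕ) : List Bool :=
  (List.range j).map fun i => decide (i ∈ E)

lemma primrec_seg' : Primrec₂ seg' :=
  Primrec.list_map (Primrec.list_range.comp Primrec.snd)
    (primrec_finset_mem.comp (Primrec.fst.comp Primrec.fst) Primrec.snd)

/-- The full verifier: given `((m, E), k)`, checks that for every `j ≤ m`, either
`j < m` and `j ∈ E`, or no string of length `k` extends `(seg' E j) ⌢ 1` inside the tree. -/
def checkP (d : List Bool → Bool) (m : ℕ) (E : Finset ℕ) (k j : ℕ) : Bool :=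
  (decide (j < m) && decide (j ∈ E)) || diesB d (seg' E j ++ [true], k)

def checkB (d : List Bool → Bool) (a : (ℕ × Finset ℕ) × ℕ) : Bool :=
  Nat.rec (motive := fun _ => Bool) true
    (fun j ih => ih && checkP d a.1.1 a.1.2 a.2 j)
    (a.1.1 + 1)

lemma checkB_eq_true (d : List Bool → Bool) (m : ℕ) (E : Finset ℕ) (k : ℕ) :
    checkB d ((m, E), k) = true ↔ ∀ j < m + 1, checkP d m E k j = true :=
  nat_rec_and_eq_true (checkP d m E k) (m + 1)

lemma computable_checkB {d : List Bool → Bool} (hd : Computable d) : Computable (checkB d) := by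
  have c1 : Primrec fun q : ((ℕ × Finset ℕ) × ℕ) × ℕ × Bool =>
      (decide (q.2.1 < q.1.1.1) && decide (q.2.1 ∈ q.1.1.2)) :=
    (Primrec.dom_bool₂ (· && ·)).comp
      (Primrec.nat_lt.comp (Primrec.fst.comp Primrec.snd)
        (Primrec.fst.comp (Primrec.fst.comp Primrec.fst))).decide
      (primrec_finset_mem.comp (Primrec.snd.comp (Primrec.fst.comp Primrec.fst))
        (Primrec.fst.comp Primrec.snd))
  have carg : Primrec fun q : ((ℕ × Finset ℕ) × ℕ) × ℕ × Bool =>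
      ((seg' q.1.1.2 q.2.1 ++ [true], q.1.2) : List Bool × ℕ) :=
    Primrec.pair
      (Primrec.list_concat.comp
        (primrec_seg'.comp (Primrec.snd.comp (Primrec.fst.comp Primrec.fst))
          (Primrec.fst.comp Primrec.snd))
        (Primrec.const true))
      (Primrec.snd.comp Primrec.fst)
  have cd : Computable fun q : ((ℕ × Finset ℕ) × ℕ) × ℕ × Bool =>
      diesB d (seg' q.1.1.2 q.2.1 ++ [true], q.1.2) :=
    (computable_diesB hd).comp carg.to_comp
  have cor : Computable fun q : ((ℕ × Finset ℕ) × ℕ) × ℕ × Bool =>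
      checkP d q.1.1.1 q.1.1.2 q.1.2 q.2.1 := by
    unfold checkP
    exact (Primrec.dom_bool₂ (· || ·)).to_comp.comp c1.to_comp cd
  have hh : Computable₂ fun (a : (ℕ × Finset ℕ) × ℕ) (p : ℕ × Bool) =>
      p.2 && checkP d a.1.1 a.1.2 a.2 p.1 :=
    (Primrec.dom_bool₂ (· && ·)).to_comp.comp
      (Primrec.snd.comp Primrec.snd).to_comp cor
  exact (Computable.nat_rec (f := fun a : (ℕ × Finset ℕ) × ℕ => a.1.1 + 1)
    (g := fun _ => true) (h := fun a p => p.2 && checkP d a.1.1 a.1.2 a.2 p.1)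
    (Primrec.succ.comp (Primrec.fst.comp Primrec.fst)).to_comp
    (Computable.const true) hh).of_eq fun a => rfl

end RPE

namespace RPE

/-- No string of length `k` extends `ρ` inside `T`. -/
def Dies (T : Set (List Bool)) (ρ : List Bool) (k : ℕ) : Prop :=
  ∀ μ : List Bool, μ.length = k → ρ ++ μ ∉ T

/-- `ρ` has extensions in `T` of every length. -/
def ExtT (T : Set (List Bool)) (ρ : List Bool) : Prop :=
  ∀ k, ∃ μ : List Bool, μ.length = k ∧ ρ ++ μ ∈ T

variable {T : Set (List Bool)}

lemma dies_mono (hT1 : ∀ σ τ : List Bool, σ ∈ T → τ <+: σ → τ ∈ T) {ρ : List Bool} {k k' : ℕ}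
    (h : Dies T ρ k) (hk : k ≤ k') : Dies T ρ k' := by
  intro μ hμ hmem
  refine h (μ.take k) (by rw [List.length_take]; omega) (hT1 _ _ hmem ?_)
  exact ⟨μ.drop k, by rw [List.append_assoc, List.take_append_drop]⟩

lemma extT_step (hT1 : ∀ σ τ : List Bool, σ ∈ T → τ <+: σ → τ ∈ T) {ρ : List Bool}
    (h : ExtT T ρ) : ∃ b, ExtT T (ρ ++ [b]) := by
  by_contra hc
  push_neg at hc
  simp only [ExtT, not_forall, not_exists, not_and] at hc
  obtain ⟨k0, h0⟩ := hc false
  obtain ⟨k1, h1⟩ := hc true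
  obtain ⟨μ, hlen, hmem⟩ := h (max k0 k1 + 1)
  cases μ with
  | nil => simp at hlen
  | cons b μ' =>
    have hlen' : μ'.length = max k0 k1 := by simpa using hlen
    have key : ∀ k : ℕ, k ≤ max k0 k1 → (ρ ++ [b]) ++ μ'.take k ∈ T := by
      intro k hk
      refine hT1 (ρ ++ (b :: μ')) _ hmem ?_
      exact ⟨μ'.drop k, by
        rw [List.append_assoc, List.take_append_drop]; simp⟩
    cases b with
    | false =>
      exact h0 (μ'.take k0) (by rw [List.length_take]; omega) (key k0 (le_max_left _ _))
    | true =>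
      exact h1 (μ'.take k1) (by rw [List.length_take]; omega) (key k1 (le_max_right _ _))

open Classical in
/-- Grow a string one bit at a time, keeping extendibility. -/
noncomputable def growList (T : Set (List Bool)) (ρ : List Bool) : ℕ → List Bool := fun n =>
  Nat.rec ρ (fun _ σ => σ ++ [if ExtT T (σ ++ [false]) then false else true]) n

open Classical in
lemma growList_succ (ρ : List Bool) (n : ℕ) :
    growList T ρ (n + 1) = growList T ρ n ++
      [if ExtT T (growList T ρ n ++ [false]) then false else true] := rfl

lemma growList_length (ρ : List Bool) (n : ℕ) :
    (growList T ρ n).length = ρ.length + n := by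
  induction n with
  | zero => rfl
  | succ n ih => rw [growList_succ, List.length_append, ih]; simp; omega

lemma growList_ext (hT1 : ∀ σ τ : List Bool, σ ∈ T → τ <+: σ → τ ∈ T) {ρ : List Bool}
    (h : ExtT T ρ) : ∀ n, ExtT T (growList T ρ n) := by
  intro n
  induction n with
  | zero => exact h
  | succ n ih =>
    rw [growList_succ]
    by_cases hf : ExtT T (growList T ρ n ++ [false])
    · rwa [if_pos hf]
    · rw [if_neg hf]
      obtain ⟨b, hb⟩ := extT_step hT1 ih
      cases b with
      | false => exact absurd hb hf
      | true => exact hb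

lemma growList_prefix_le (ρ : List Bool) {m n : ℕ} (h : m ≤ n) :
    growList T ρ m <+: growList T ρ n := by
  induction n with
  | zero => cases Nat.le_zero.1 h; exact List.prefix_rfl
  | succ n ih =>
    rcases Nat.lt_succ_iff_lt_or_eq.1 (Nat.lt_succ_of_le h) with h' | rfl
    · exact (ih (Nat.lt_succ_iff.1 h')).trans
        (by rw [growList_succ]; exact List.prefix_append _ _)
    · exact List.prefix_rfl

lemma prefix_getD {σ τ : List Bool} {i : ℕ} (h : σ <+: τ) (hi : i < σ.length) :
    τ.getD i false = σ.getD i false := by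
  obtain ⟨t, rfl⟩ := h
  rw [List.getD_append _ _ _ _ hi]

lemma list_mem_of_extT (ρ : List Bool) (h : ExtT T ρ) : ρ ∈ T := by
  obtain ⟨μ, hμ, hmem⟩ := h 0
  rw [List.length_eq_zero_iff] at hμ
  subst hμ
  simpa using hmem

lemma koenig (hT1 : ∀ σ τ : List Bool, σ ∈ T → τ <+: σ → τ ∈ T) (ρ : List Bool)
    (hext : ExtT T ρ) : ∃ Z : Set ℕ, IsPath T Z ∧ seg Z ρ.length = ρ := by
  classical
  set L := growList T ρ with hL
  set Z : Set ℕ := {i | (L (i + 1)).getD i false = true} with hZ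
  have hlen : ∀ n, (L n).length = ρ.length + n := growList_length ρ
  have hgetD : ∀ i n, i < n → (L n).getD i false = (L (i + 1)).getD i false := by
    intro i n hin
    exact prefix_getD (growList_prefix_le ρ hin) (by rw [hlen]; omega)
  have hseg : ∀ k, seg Z k = (L k).take k := by
    intro k
    apply List.ext_getElem
    · simp [seg, List.length_take, hlen]
    · intro i h1 h2
      have hik : i < k := by simpa [seg] using h1
      rw [List.getElem_take]
      simp only [seg, List.getElem_map, List.getElem_range]
      have hmemZ : decide (i ∈ Z) = (L (i + 1)).getD i false := by
        by_cases hiZ : i ∈ Z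
        · rw [decide_eq_true hiZ]
          exact (show (L (i + 1)).getD i false = true from hiZ).symm
        · rw [decide_eq_false hiZ]
          exact (Bool.eq_false_iff.2 fun ht => hiZ ht).symm
      have h3 : i < (L k).length := by rw [hlen]; omega
      rw [hmemZ, ← hgetD i k hik, List.getD_eq_getElem _ _ h3]
  have hpath : IsPath T Z := by
    intro k
    rw [hseg k]
    exact hT1 _ _ (list_mem_of_extT _ (growList_ext hT1 hext k)) (List.take_prefix _ _)
  refine ⟨Z, hpath, ?_⟩
  rw [hseg ρ.length]
  obtain ⟨t, ht⟩ : L 0 <+: L ρ.length := growList_prefix_le ρ (Nat.zero_le _)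
  have hL0 : L 0 = ρ := rfl
  rw [← ht, hL0, List.take_left]

lemma seg_length (X : Set ℕ) (k : ℕ) : (seg X k).length = k := by simp [seg]

lemma seg_succ_mem {X : Set ℕ} {k : ℕ} (h : k ∈ X) : seg X (k + 1) = seg X k ++ [true] := by
  simp [seg, List.range_succ, h]

lemma seg_succ_not_mem {X : Set ℕ} {k : ℕ} (h : k ∉ X) : seg X (k + 1) = seg X k ++ [false] := by
  simp [seg, List.range_succ, h]

lemma seg_exists_ext (X : Set ℕ) (a b : ℕ) :
    ∃ μ : List Bool, μ.length = b ∧ seg X (a + b) = seg X a ++ μ := by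
  classical
  refine ⟨(List.range b).map fun i => decide ((a + i) ∈ X), by simp, ?_⟩
  simp [seg, List.range_add, List.map_map, Function.comp_def]

lemma not_mem_iff_dies (hT1 : ∀ σ τ : List Bool, σ ∈ T → τ <+: σ → τ ∈ T)
    {X : Set ℕ} (hX : IsPath T X)
    (hrm : ∀ m : ℕ, m ∉ X ↔ ¬ ∃ Z : Set ℕ, IsPath T Z ∧ seg Z (m + 1) = seg X m ++ [true])
    (j : ℕ) : j ∉ X ↔ ∃ k, Dies T (seg X j ++ [true]) k := by
  constructor
  · intro hj
    by_contra hk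
    push_neg at hk
    have hext : ExtT T (seg X j ++ [true]) := by
      intro k
      have := hk k
      simp only [Dies, not_forall, not_not] at this
      obtain ⟨μ, hμ⟩ := this
      exact ⟨μ, hμ.1, hμ.2⟩
    obtain ⟨Z, hZpath, hZseg⟩ := koenig hT1 _ hext
    have hl : (seg X j ++ [true]).length = j + 1 := by simp [seg_length]
    rw [hl] at hZseg
    exact (hrm j).1 hj ⟨Z, hZpath, hZseg⟩
  · rintro ⟨k, hk⟩ hj
    have h1 : seg X (j + 1) = seg X j ++ [true] := seg_succ_mem hj
    obtain ⟨μ, hμl, hμe⟩ := seg_exists_ext X (j + 1) k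
    exact hk μ hμl (by rw [← h1, ← hμe]; exact hX (j + 1 + k))

lemma exists_uniform {P : ℕ → ℕ → Prop} (mono : ∀ j k k', k ≤ k' → P j k → P j k') :
    ∀ m : ℕ, (∀ j ≤ m, ∃ k, P j k) → ∃ k, ∀ j ≤ m, P j k := by
  intro m
  induction m with
  | zero =>
    intro h
    obtain ⟨k, hk⟩ := h 0 le_rfl
    exact ⟨k, fun j hj => by cases Nat.le_zero.1 hj; exact hk⟩
  | succ m ih =>
    intro h
    obtain ⟨k1, hk1⟩ := ih fun j hj => h j (hj.trans (Nat.le_succ m))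
    obtain ⟨k2, hk2⟩ := h (m + 1) le_rfl
    refine ⟨max k1 k2, fun j hj => ?_⟩
    rcases Nat.lt_succ_iff_lt_or_eq.1 (Nat.lt_succ_of_le hj) with h' | rfl
    · exact mono j k1 _ (le_max_left _ _) (hk1 j (Nat.lt_succ_iff.1 h'))
    · exact mono _ k2 _ (le_max_right _ _) hk2

lemma seg'_succ_mem {E : Finset ℕ} {j : ℕ} (h : j ∈ E) :
    seg' E (j + 1) = seg' E j ++ [true] := by
  simp [seg', List.range_succ, h]

lemma seg'_succ_not_mem {E : Finset ℕ} {j : ℕ} (h : j ∉ E) :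
    seg' E (j + 1) = seg' E j ++ [false] := by
  simp [seg', List.range_succ, h]

lemma seg'_eq_seg {X : Set ℕ} {E : Finset ℕ} {m : ℕ} (hE : ↑E ⊆ X)
    (hd : ∀ j < m, j ∉ E → seg' E j = seg X j → j ∉ X) :
    ∀ j ≤ m, seg' E j = seg X j := by
  intro j
  induction j with
  | zero => intro _; rfl
  | succ j ih =>
    intro hj
    have hjm : j < m := Nat.lt_of_succ_le hj
    have hseg : seg' E j = seg X j := ih hjm.le
    by_cases hjE : j ∈ E
    · rw [seg'_succ_mem hjE, seg_succ_mem (hE (Finset.mem_coe.2 hjE)), hseg]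
    · rw [seg'_succ_not_mem hjE, seg_succ_not_mem (hd j hjm hjE hseg), hseg]

end RPE

/-- The rightmost path `X` through a computable tree satisfies `Xᶜ ≤_e X`, witnessed by
a c.e. set `C` of pairs `(m, E)`. -/
theorem rightmost_path_enumLE (T : Set (List Bool)) (hT : ComputableTree T)
    (X : Set ℕ) (hX : IsPath T X)
    (hrm : ∀ m : ℕ, m ∉ X ↔ ¬ ∃ Z : Set ℕ, IsPath T Z ∧ seg Z (m + 1) = seg X m ++ [true]) :
    EnumLE Xᶜ X ∧
      ∃ C : Set (ℕ × Finset ℕ), CEPred (· ∈ C) ∧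
        ∀ m : ℕ, m ∉ X ↔ ∃ E : Finset ℕ, ↑E ⊆ X ∧ (m, E) ∈ C := by
  classical
  obtain ⟨hT1, hT2⟩ := hT
  obtain ⟨hdec, hdcomp⟩ := hT2
  set d : List Bool → Bool := fun σ => @decide (σ ∈ T) (hdec σ) with hd_def
  have hdcomp' : Computable d := hdcomp
  have hdspec' : ∀ σ, d σ = false ↔ σ ∉ T := fun σ => by
    rw [hd_def]; exact decide_eq_false_iff_not
  set C : Set (ℕ × Finset ℕ) := {p | ∃ k, RPE.checkB d (p, k) = true} with hC
  have hce : CEPred (· ∈ C) := by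
    refine ⟨fun p => (Nat.rfind fun k => Part.some (RPE.checkB d (p, k))).map fun _ => (), ?_, ?_⟩
    · have hcheck : Computable₂ fun (p : ℕ × Finset ℕ) (k : ℕ) => RPE.checkB d (p, k) :=
        Computable.to₂ ((RPE.computable_checkB hdcomp').comp
          (Computable.pair Computable.fst Computable.snd))
      exact (Partrec.rfind hcheck.partrec₂).map
        (Computable.to₂ (Computable.const ()))
    · intro p
      simp only [hC, Set.mem_setOf_eq, Part.map_Dom, Nat.rfind_dom]
      constructor
      · rintro ⟨k, hk⟩
        exact ⟨k, Part.mem_some_iff.2 hk.symm, fun {_} _ => trivial⟩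
      · rintro ⟨k, hk, -⟩
        exact ⟨k, (Part.mem_some_iff.1 hk).symm⟩
  have hmain : ∀ m : ℕ, m ∉ X ↔ ∃ E : Finset ℕ, ↑E ⊆ X ∧ (m, E) ∈ C := by
    intro m
    constructor
    · intro hm
      set E : Finset ℕ := (Finset.range m).filter (· ∈ X) with hE_def
      have hE : ↑E ⊆ X := by
        intro x hx
        simp only [hE_def, Finset.coe_filter, Finset.mem_range, Set.mem_setOf_eq] at hx
        exact hx.2
      have hEX : ∀ j, j < m → (j ∈ E ↔ j ∈ X) := fun j hj => by
        simp [hE_def, Finset.mem_filter, Finset.mem_range, hj]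
      have hexk : ∃ k, ∀ j ≤ m, j ∉ X → RPE.Dies T (seg X j ++ [true]) k := by
        apply RPE.exists_uniform (P := fun j k => j ∉ X → RPE.Dies T (seg X j ++ [true]) k)
          (fun j k k' hkk h hj => RPE.dies_mono hT1 (h hj) hkk)
        intro j _
        by_cases hjX : j ∈ X
        · exact ⟨0, fun h => absurd hjX h⟩
        · obtain ⟨k, hk⟩ := (RPE.not_mem_iff_dies hT1 hX hrm j).1 hjX
          exact ⟨k, fun _ => hk⟩
      obtain ⟨k, hk⟩ := hexk
      have hseg : ∀ j ≤ m, RPE.seg' E j = seg X j :=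
        RPE.seg'_eq_seg hE (fun j hjm hjE _ hjX => hjE ((hEX j hjm).2 hjX))
      refine ⟨E, hE, ⟨k, ?_⟩⟩
      rw [RPE.checkB_eq_true]
      intro j hj
      have hjm : j ≤ m := Nat.lt_succ_iff.1 hj
      by_cases hcase : j < m ∧ j ∈ E
      · simp only [RPE.checkP, Bool.or_eq_true, Bool.and_eq_true]
        exact Or.inl ⟨decide_eq_true hcase.1, decide_eq_true hcase.2⟩
      · have hjX : j ∉ X := by
          rcases Nat.lt_or_ge j m with hlt | hge
          · have hjE : j ∉ E := fun hE' => hcase ⟨hlt, hE'⟩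
            exact fun hX' => hjE ((hEX j hlt).2 hX')
          · have : j = m := le_antisymm hjm hge
            exact this ▸ hm
        have hdies : RPE.Dies T (RPE.seg' E j ++ [true]) k := by
          rw [hseg j hjm]; exact hk j hjm hjX
        simp only [RPE.checkP, Bool.or_eq_true]
        right
        rw [RPE.diesB_eq_true]
        intro μ hμ
        exact (hdspec' _).2 (hdies μ hμ)
    · rintro ⟨E, hE, hmem⟩
      obtain ⟨k, hchk⟩ := hmem
      rw [RPE.checkB_eq_true] at hchk
      have hP : ∀ j ≤ m, (j < m ∧ j ∈ E) ∨ RPE.Dies T (RPE.seg' E j ++ [true]) k := by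
        intro j hj
        have h := hchk j (Nat.lt_succ_of_le hj)
        simp only [RPE.checkP, Bool.or_eq_true, Bool.and_eq_true, decide_eq_true_eq] at h
        rcases h with h | h
        · exact Or.inl h
        · right
          rw [RPE.diesB_eq_true] at h
          exact fun μ hμ => (hdspec' _).1 (h μ hμ)
      have hseg : ∀ j ≤ m, RPE.seg' E j = seg X j := by
        apply RPE.seg'_eq_seg hE
        intro j hjm hjE hsg
        rcases hP j hjm.le with ⟨_, hjE'⟩ | hdies
        · exact absurd hjE' hjE
        · exact (RPE.not_mem_iff_dies hT1 hX hrm j).2 ⟨k, hsg ▸ hdies⟩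
      rcases hP m le_rfl with ⟨hmm, _⟩ | hdies
      · exact absurd hmm (lt_irrefl m)
      · exact (RPE.not_mem_iff_dies hT1 hX hrm m).2 ⟨k, (hseg m le_rfl) ▸ hdies⟩
  exact ⟨⟨C, hce, fun n => by rw [Set.mem_compl_iff]; exact hmain n⟩, C, hce, hmain⟩
end

section
/- Every 1-generic real X is relatively c.e.a.: there is a real Y with Y <_T X such that X is c.e.(Y). -/
namespace OGCEA

open Nat.Partrec (Code)
open Nat.Partrec.Code
open Classical

/-! ### Basic lemmas about `RecursiveIn` -/

lemma recIn_of_eq {O f g : ℕ →. ℕ} (h : RecursiveInOracle O f) (H : ∀ n, f n = g n) :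
    RecursiveInOracle O g := by
  have : f = g := funext H
  exact this ▸ h

lemma recIn_of_partrec {O f : ℕ →. ℕ} (h : Nat.Partrec f) : RecursiveInOracle O f := by
  induction h with
  | zero => exact .zero
  | succ => exact .succ
  | left => exact .left
  | right => exact .right
  | pair _ _ ihf ihg => exact .pair ihf ihg
  | comp _ _ ihf ihg => exact .comp ihf ihg
  | prec _ _ ihf ihg => exact .prec ihf ihg
  | rfind _ ihf => exact .rfind ihf

/-! ### The set `Y` -/

/-- The "one-sided certificate" version of `X`: `q = ⟨a, m⟩` belongs to `Yset X`
iff `a ∈ X` and the certificate position `2q+1` is *not* in `X`. -/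
def Yset (X : Set ℕ) : Set ℕ := {q | (Nat.unpair q).1 ∈ X ∧ 2 * q + 1 ∉ X}

/-! ### Segments -/

@[simp] lemma seg_length (X : Set ℕ) (k : ℕ) : (seg X k).length = k := by
  simp [seg]

lemma seg_getD {X : Set ℕ} {i k : ℕ} (h : i < k) :
    (seg X k).getD i false = decide (i ∈ X) := by
  simp [seg, List.getD_eq_getElem?_getD, List.getElem?_map, List.getElem?_range, h]

lemma seg_prefix_seg {X : Set ℕ} {k k' : ℕ} (h : k ≤ k') : seg X k <+: seg X k' := by
  have e : seg X k = (seg X k').take k := by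
    rw [seg, seg, ← List.map_take, List.take_range, Nat.min_eq_left h]
  rw [e]
  exact List.take_prefix _ _

/-! ### The string approximation of the oracle `chi (Yset X)` -/

/-- Approximate oracle answers computed from a finite binary string. -/
def yhatO (σ : List Bool) (q : ℕ) : Option ℕ :=
  if 2 * q + 1 < σ.length then
    some (if σ.getD (Nat.unpair q).1 false = true ∧ σ.getD (2 * q + 1) false = false
      then 1 else 0)
  else none

/-- The approximate oracle as a partial function. -/
def yhat (σ : List Bool) (q : ℕ) : Part ℕ := Part.ofOption (yhatO σ q)

lemma yhat_seg {X : Set ℕ} {q k : ℕ} (h : 2 * q + 1 < k) :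
    yhat (seg X k) q = chi (Yset X) q := by
  have ha : (Nat.unpair q).1 < k := by
    have := Nat.unpair_left_le q; omega
  rw [yhat, yhatO, if_pos (by simpa using h), seg_getD ha, seg_getD (by simpa using h)]
  by_cases hq : q ∈ Yset X
  · obtain ⟨h1, h2⟩ := hq
    simp [chi, Yset, h1, h2]
  · rw [Yset, Set.mem_setOf_eq, not_and_or] at hq
    rcases hq with hq | hq
    · simp [chi, Yset, hq]
    · rw [not_not] at hq
      simp [chi, Yset, hq]

lemma yhat_dom_lt {σ : List Bool} {q v : ℕ} (h : v ∈ yhat σ q) : 2 * q + 1 < σ.length := by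
  by_contra hq
  simp [yhat, yhatO, hq] at h

/-! ### Approximation families -/

/-- The use property: any converging computation only depends on finitely many
settled oracle queries. -/
def UseOK (F : List Bool → ℕ →. ℕ) : Prop :=
  ∀ σ n v, v ∈ F σ n → ∃ Q : Finset ℕ, (∀ q ∈ Q, 2 * q + 1 < σ.length) ∧
      ∀ τ : List Bool, (∀ q ∈ Q, yhat τ q = yhat σ q) → v ∈ F τ n

/-- `F` is a good string-indexed approximation family for the partial function `f`
(computed from the oracle `chi (Yset X)`). -/
structure Approx (X : Set ℕ) (f : ℕ →. ℕ) (F : List Bool → ℕ →. ℕ) : Prop where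
  partrec : Partrec fun p : List Bool × ℕ => F p.1 p.2
  sound : ∀ k n v, v ∈ F (seg X k) n → v ∈ f n
  complete : ∀ n v, v ∈ f n → ∃ k, v ∈ F (seg X k) n
  use : UseOK F

lemma Approx.mono {X f F} (hF : Approx X f F) {k k' n v} (hk : k ≤ k')
    (h : v ∈ F (seg X k) n) : v ∈ F (seg X k') n := by
  obtain ⟨Q, hQ, hT⟩ := hF.use _ _ _ h
  refine hT _ fun q hq => ?_
  have h1 := hQ q hq
  rw [yhat_seg (lt_of_lt_of_le (by simpa using h1) hk), yhat_seg (by simpa using h1)]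

lemma primrec_two_mul_add_one : Primrec fun n : ℕ => 2 * n + 1 :=
  Primrec.nat_add.comp (Primrec.nat_mul.comp (Primrec.const 2) Primrec.id) (Primrec.const 1)

lemma mem_pairSeq {x y : Part ℕ} {v : ℕ} :
    v ∈ (Nat.pair <$> x <*> y) ↔ ∃ a ∈ x, ∃ b ∈ y, v = Nat.pair a b := by
  simp only [Seq.seq, Part.map_eq_map, Part.bind_eq_bind, Part.mem_bind_iff, Part.mem_map_iff]
  constructor
  · rintro ⟨g, ⟨a, ha, rfl⟩, b, hb, rfl⟩
    exact ⟨a, ha, b, hb, rfl⟩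
  · rintro ⟨a, ha, b, hb, rfl⟩
    exact ⟨Nat.pair a, ⟨a, ha, rfl⟩, b, hb, rfl⟩

lemma mono_of_use {X : Set ℕ} {F : List Bool → ℕ →. ℕ} (hu : UseOK F)
    {k k' n v} (hk : k ≤ k') (h : v ∈ F (seg X k) n) : v ∈ F (seg X k') n := by
  obtain ⟨Q, hQ, hT⟩ := hu _ _ _ h
  refine hT _ fun q hq => ?_
  have h1 := hQ q hq
  rw [yhat_seg (lt_of_lt_of_le (by simpa using h1) hk), yhat_seg (by simpa using h1)]

lemma approx_const {X : Set ℕ} {f : ℕ →. ℕ}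
    (hf : Partrec fun p : List Bool × ℕ => f p.2) : Approx X f (fun _ => f) where
  partrec := hf
  sound := fun _ _ _ h => h
  complete := fun n v h => ⟨0, h⟩
  use := fun σ n v h => ⟨∅, by simp, fun τ _ => h⟩

lemma approx_zero {X : Set ℕ} : Approx X (fun _ => 0) (fun _ => fun _ => 0) :=
  approx_const ((Computable.const 0).partrec.comp Computable.snd)

lemma approx_succ {X : Set ℕ} : Approx X Nat.succ (fun _ => Nat.succ) :=
  approx_const (Computable.partrec (Computable.succ.comp Computable.snd))

lemma approx_left {X : Set ℕ} :
    Approx X (fun n => (Nat.unpair n).1) (fun _ => fun n => (Nat.unpair n).1) :=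
  approx_const (Computable.partrec ((Computable.fst.comp Computable.unpair).comp Computable.snd))

lemma approx_right {X : Set ℕ} :
    Approx X (fun n => (Nat.unpair n).2) (fun _ => fun n => (Nat.unpair n).2) :=
  approx_const (Computable.partrec ((Computable.snd.comp Computable.unpair).comp Computable.snd))

lemma approx_oracle {X : Set ℕ} : Approx X (chi (Yset X)) yhat where
  partrec := by
    have hO : Computable fun p : List Bool × ℕ => yhatO p.1 p.2 := by
      have hc : PrimrecPred fun p : List Bool × ℕ => 2 * p.2 + 1 < p.1.length :=
        Primrec.nat_lt.comp (primrec_two_mul_add_one.comp Primrec.snd)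
          (Primrec.list_length.comp Primrec.fst)
      have hinner : Primrec fun p : List Bool × ℕ =>
          (if p.1.getD (Nat.unpair p.2).1 false = true ∧ p.1.getD (2 * p.2 + 1) false = false
            then (1:ℕ) else 0) := by
        have h1 : PrimrecPred fun p : List Bool × ℕ => p.1.getD (Nat.unpair p.2).1 false = true :=
          Primrec.eq.comp
            ((Primrec.list_getD false).comp Primrec.fst
              (Primrec.fst.comp (Primrec.unpair.comp Primrec.snd)))
            (Primrec.const true)
        have h2 : PrimrecPred fun p : List Bool × ℕ => p.1.getD (2 * p.2 + 1) false = false :=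
          Primrec.eq.comp
            ((Primrec.list_getD false).comp Primrec.fst
              (primrec_two_mul_add_one.comp Primrec.snd))
            (Primrec.const false)
        exact Primrec.ite (h1.and h2) (Primrec.const 1) (Primrec.const 0)
      exact (Primrec.ite hc (Primrec.option_some.comp hinner) (Primrec.const none)).to_comp
    exact (Computable.ofOption hO).of_eq fun p => rfl
  sound := by
    intro k n v h
    have hlt : 2 * n + 1 < k := by simpa using yhat_dom_lt h
    rwa [yhat_seg hlt] at h
  complete := by
    intro n v h
    exact ⟨2 * n + 2, by rwa [yhat_seg (by omega)]⟩
  use := by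
    intro σ n v h
    refine ⟨{n}, by simpa using yhat_dom_lt h, fun τ hτ => ?_⟩
    rw [hτ n (Finset.mem_singleton_self n)]
    exact h

lemma approx_pair {X : Set ℕ} {f g F G} (hf : Approx X f F) (hg : Approx X g G) :
    Approx X (fun n => Nat.pair <$> f n <*> g n)
      (fun σ n => Nat.pair <$> F σ n <*> G σ n) where
  partrec := by
    have h1 : Partrec fun q : (List Bool × ℕ) × ℕ => (G q.1.1 q.1.2).map (Nat.pair q.2) :=
      (hg.partrec.comp ((Computable.fst.comp Computable.fst).pair
        (Computable.snd.comp Computable.fst))).map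
        (((Primrec₂.natPair.comp (Primrec.snd.comp Primrec.fst) Primrec.snd).to_comp).to₂)
    exact (hf.partrec.bind h1.to₂).of_eq fun p => by
      simp [Seq.seq]
  sound := by
    intro k n v h
    obtain ⟨a, ha, b, hb, rfl⟩ := mem_pairSeq.1 h
    exact mem_pairSeq.2 ⟨a, hf.sound _ _ _ ha, b, hg.sound _ _ _ hb, rfl⟩
  complete := by
    intro n v h
    obtain ⟨a, ha, b, hb, rfl⟩ := mem_pairSeq.1 h
    obtain ⟨k1, hk1⟩ := hf.complete _ _ ha
    obtain ⟨k2, hk2⟩ := hg.complete _ _ hb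
    exact ⟨max k1 k2, mem_pairSeq.2 ⟨a, hf.mono (le_max_left _ _) hk1, b,
      hg.mono (le_max_right _ _) hk2, rfl⟩⟩
  use := by
    intro σ n v h
    obtain ⟨a, ha, b, hb, rfl⟩ := mem_pairSeq.1 h
    obtain ⟨Qf, hQf, hTf⟩ := hf.use _ _ _ ha
    obtain ⟨Qg, hQg, hTg⟩ := hg.use _ _ _ hb
    refine ⟨Qf ∪ Qg, ?_, fun τ hτ => ?_⟩
    · intro q hq
      rcases Finset.mem_union.1 hq with hq | hq
      exacts [hQf q hq, hQg q hq]
    · exact mem_pairSeq.2 ⟨a, hTf τ (fun q hq => hτ q (Finset.mem_union_left _ hq)), b,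
        hTg τ (fun q hq => hτ q (Finset.mem_union_right _ hq)), rfl⟩

lemma approx_comp {X : Set ℕ} {f g F G} (hf : Approx X f F) (hg : Approx X g G) :
    Approx X (fun n => g n >>= f) (fun σ n => G σ n >>= F σ) where
  partrec := hg.partrec.bind
    ((hf.partrec.comp ((Computable.fst.comp Computable.fst).pair Computable.snd)).to₂)
  sound := by
    intro k n v h
    obtain ⟨w, hw, hv⟩ := Part.mem_bind_iff.1 h
    exact Part.mem_bind_iff.2 ⟨w, hg.sound _ _ _ hw, hf.sound _ _ _ hv⟩
  complete := by
    intro n v h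
    obtain ⟨w, hw, hv⟩ := Part.mem_bind_iff.1 h
    obtain ⟨k1, hk1⟩ := hg.complete _ _ hw
    obtain ⟨k2, hk2⟩ := hf.complete _ _ hv
    exact ⟨max k1 k2, Part.mem_bind_iff.2 ⟨w, hg.mono (le_max_left _ _) hk1,
      hf.mono (le_max_right _ _) hk2⟩⟩
  use := by
    intro σ n v h
    obtain ⟨w, hw, hv⟩ := Part.mem_bind_iff.1 h
    obtain ⟨Qg, hQg, hTg⟩ := hg.use _ _ _ hw
    obtain ⟨Qf, hQf, hTf⟩ := hf.use _ _ _ hv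
    refine ⟨Qg ∪ Qf, ?_, fun τ hτ => ?_⟩
    · intro q hq
      rcases Finset.mem_union.1 hq with hq | hq
      exacts [hQg q hq, hQf q hq]
    · exact Part.mem_bind_iff.2 ⟨w, hTg τ (fun q hq => hτ q (Finset.mem_union_left _ hq)),
        hTf τ (fun q hq => hτ q (Finset.mem_union_right _ hq))⟩

lemma uniform_bound (v : ℕ) (P : ℕ → ℕ → Prop)
    (hmono : ∀ m k k', k ≤ k' → P m k → P m k')
    (h : ∀ m, m ≤ v → ∃ k, P m k) : ∃ k, ∀ m, m ≤ v → P m k := by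
  induction v with
  | zero =>
    obtain ⟨k, hk⟩ := h 0 le_rfl
    refine ⟨k, fun m hm => ?_⟩
    obtain rfl := Nat.le_zero.1 hm
    exact hk
  | succ v ih =>
    obtain ⟨k1, hk1⟩ := ih fun m hm => h m (hm.trans (Nat.le_succ v))
    obtain ⟨k2, hk2⟩ := h (v + 1) le_rfl
    refine ⟨max k1 k2, fun m hm => ?_⟩
    rcases Nat.eq_or_lt_of_le hm with rfl | h'
    · exact hmono _ _ _ (le_max_right _ _) hk2
    · exact hmono _ _ _ (le_max_left _ _) (hk1 m (Nat.lt_succ_iff.1 h'))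

lemma uniform_finset (v L : ℕ) (T : ℕ → Finset ℕ → Prop)
    (h : ∀ m, m ≤ v → ∃ Q, (∀ q ∈ Q, 2 * q + 1 < L) ∧ T m Q) :
    ∃ Q : Finset ℕ, (∀ q ∈ Q, 2 * q + 1 < L) ∧
      ∀ m, m ≤ v → ∃ Q', Q' ⊆ Q ∧ T m Q' := by
  induction v with
  | zero =>
    obtain ⟨Q, hb, hQ⟩ := h 0 le_rfl
    refine ⟨Q, hb, fun m hm => ?_⟩
    obtain rfl := Nat.le_zero.1 hm
    exact ⟨Q, subset_rfl, hQ⟩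
  | succ v ih =>
    obtain ⟨Q1, hb1, hQ1⟩ := ih fun m hm => h m (hm.trans (Nat.le_succ v))
    obtain ⟨Q2, hb2, hQ2⟩ := h (v + 1) le_rfl
    refine ⟨Q1 ∪ Q2, ?_, fun m hm => ?_⟩
    · intro q hq
      rcases Finset.mem_union.1 hq with hq | hq
      exacts [hb1 q hq, hb2 q hq]
    rcases Nat.eq_or_lt_of_le hm with rfl | h'
    · exact ⟨Q2, Finset.subset_union_right, hQ2⟩
    · obtain ⟨Q', hs, hT⟩ := hQ1 m (Nat.lt_succ_iff.1 h')
      exact ⟨Q', hs.trans Finset.subset_union_left, hT⟩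

lemma unpaired_pair {α} (f : ℕ → ℕ → α) (a m : ℕ) :
    Nat.unpaired f (Nat.pair a m) = f a m := by
  simp [Nat.unpaired]

/-- The primitive-recursion combination of two approximation families. -/
def precF (F G : List Bool → ℕ →. ℕ) : List Bool → ℕ →. ℕ :=
  fun σ => Nat.unpaired fun a n =>
    n.rec (F σ a) fun y IH => do let i ← IH; G σ (Nat.pair a (Nat.pair y i))

lemma precF_pair (F G : List Bool → ℕ →. ℕ) (σ : List Bool) (a m : ℕ) :
    precF F G σ (Nat.pair a m)
      = m.rec (F σ a) (fun y IH => do let i ← IH; G σ (Nat.pair a (Nat.pair y i))) := by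
  simp [precF, Nat.unpaired]

lemma precF_use {F G : List Bool → ℕ →. ℕ} (hfu : UseOK F) (hgu : UseOK G) :
    UseOK (precF F G) := by
  intro σ n v h
  obtain ⟨a, m, rfl⟩ : ∃ a m, n = Nat.pair a m := ⟨_, _, (Nat.pair_unpair n).symm⟩
  rw [precF_pair] at h
  simp only [precF_pair]
  induction m generalizing v with
  | zero =>
    obtain ⟨Q, hQ, hT⟩ := hfu _ _ _ h
    exact ⟨Q, hQ, fun τ hτ => hT τ hτ⟩
  | succ m ih =>
    obtain ⟨i, hi, hv⟩ := Part.mem_bind_iff.1 h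
    obtain ⟨Q1, hQ1, hT1⟩ := ih _ hi
    obtain ⟨Q2, hQ2, hT2⟩ := hgu _ _ _ hv
    refine ⟨Q1 ∪ Q2, ?_, fun τ hτ => ?_⟩
    · intro q hq
      rcases Finset.mem_union.1 hq with hq | hq
      exacts [hQ1 q hq, hQ2 q hq]
    · exact Part.mem_bind_iff.2 ⟨i, hT1 τ (fun q hq => hτ q (Finset.mem_union_left _ hq)),
        hT2 τ (fun q hq => hτ q (Finset.mem_union_right _ hq))⟩

lemma approx_prec {X : Set ℕ} {f g F G} (hf : Approx X f F) (hg : Approx X g G) :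
    Approx X
      (Nat.unpaired fun a n =>
        n.rec (f a) fun y IH => do let i ← IH; g (Nat.pair a (Nat.pair y i)))
      (precF F G) where
  partrec := by
    have hc : Computable fun p : List Bool × ℕ => (Nat.unpair p.2).2 :=
      (Primrec.snd.comp (Primrec.unpair.comp Primrec.snd)).to_comp
    have hgp : Partrec fun p : List Bool × ℕ => F p.1 (Nat.unpair p.2).1 :=
      hf.partrec.comp (Computable.fst.pair
        ((Primrec.fst.comp (Primrec.unpair.comp Primrec.snd)).to_comp))
    have hhp : Partrec fun q : (List Bool × ℕ) × (ℕ × ℕ) =>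
        G q.1.1 (Nat.pair (Nat.unpair q.1.2).1 (Nat.pair q.2.1 q.2.2)) :=
      hg.partrec.comp ((Computable.fst.comp Computable.fst).pair
        ((Primrec₂.natPair.comp
          (Primrec.fst.comp (Primrec.unpair.comp (Primrec.snd.comp Primrec.fst)))
          (Primrec₂.natPair.comp (Primrec.fst.comp Primrec.snd)
            (Primrec.snd.comp Primrec.snd))).to_comp))
    exact (Partrec.nat_rec hc hgp hhp.to₂).of_eq fun p => by
      simp only [precF, Nat.unpaired]
      rfl
  sound := by
    intro k n v h
    obtain ⟨a, m, rfl⟩ : ∃ a m, n = Nat.pair a m := ⟨_, _, (Nat.pair_unpair n).symm⟩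
    rw [precF_pair] at h
    rw [unpaired_pair]
    induction m generalizing v with
    | zero => exact hf.sound _ _ _ h
    | succ m ih =>
      obtain ⟨i, hi, hv⟩ := Part.mem_bind_iff.1 h
      exact Part.mem_bind_iff.2 ⟨i, ih _ hi, hg.sound _ _ _ hv⟩
  complete := by
    intro n v h
    obtain ⟨a, m, rfl⟩ : ∃ a m, n = Nat.pair a m := ⟨_, _, (Nat.pair_unpair n).symm⟩
    rw [unpaired_pair] at h
    simp only [precF_pair]
    have hmono := fun {k k' nn vv} (hkk : k ≤ k') =>
      mono_of_use (X := X) (precF_use hf.use hg.use) (n := nn) (v := vv) hkk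
    induction m generalizing v with
    | zero => exact hf.complete _ _ h
    | succ m ih =>
      obtain ⟨i, hi, hv⟩ := Part.mem_bind_iff.1 h
      obtain ⟨k1, hk1⟩ := ih _ hi
      obtain ⟨k2, hk2⟩ := hg.complete _ _ hv
      refine ⟨max k1 k2, ?_⟩
      refine Part.mem_bind_iff.2 ⟨i, ?_, hg.mono (le_max_right _ _) hk2⟩
      rw [← precF_pair] at hk1 ⊢
      exact hmono (le_max_left k1 k2) hk1
  use := precF_use hf.use hg.use

lemma mem_zeroMap {x : Part ℕ} {b : Bool} :
    b ∈ (((fun m : ℕ => m = 0) <$> x) : Part Bool) ↔ ∃ w ∈ x, decide (w = 0) = b := by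
  simp only [Part.map_eq_map, Part.mem_map_iff]

lemma approx_rfind {X : Set ℕ} {f F} (hf : Approx X f F) :
    Approx X (fun a => Nat.rfind fun n => (fun m => m = 0) <$> f (Nat.pair a n))
      (fun σ a => Nat.rfind fun n => (fun m => m = 0) <$> F σ (Nat.pair a n)) where
  partrec := by
    have hb : Computable₂ fun (_ : (List Bool × ℕ) × ℕ) (v : ℕ) => decide (v = 0) :=
      ((Primrec.eq.comp Primrec.snd (Primrec.const 0)).decide.to_comp).to₂
    have hFc : Partrec fun q : (List Bool × ℕ) × ℕ => F q.1.1 (Nat.pair q.1.2 q.2) :=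
      hf.partrec.comp ((Computable.fst.comp Computable.fst).pair
        ((Primrec₂.natPair.comp (Primrec.snd.comp Primrec.fst) Primrec.snd).to_comp))
    exact (Partrec.rfind (hFc.map hb).to₂).of_eq fun p => rfl
  sound := by
    intro k a v h
    replace h := Nat.mem_rfind.1 h
    refine Nat.mem_rfind.2 ?_
    obtain ⟨h1, h2⟩ := h
    constructor
    · obtain ⟨w, hw, hd⟩ := mem_zeroMap.1 h1
      exact mem_zeroMap.2 ⟨w, hf.sound _ _ _ hw, hd⟩
    · intro m hm
      obtain ⟨w, hw, hd⟩ := mem_zeroMap.1 (h2 hm)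
      exact mem_zeroMap.2 ⟨w, hf.sound _ _ _ hw, hd⟩
  complete := by
    intro a v h
    replace h := Nat.mem_rfind.1 h
    obtain ⟨h1, h2⟩ := h
    have hall : ∀ m, m ≤ v → ∃ k, ∃ w, w ∈ F (seg X k) (Nat.pair a m) ∧
        decide (w = 0) = decide (m = v) := by
      intro m hm
      rcases Nat.eq_or_lt_of_le hm with rfl | hlt
      · obtain ⟨w, hw, hd⟩ := mem_zeroMap.1 h1
        obtain ⟨k, hk⟩ := hf.complete _ _ hw
        exact ⟨k, w, hk, by simpa using hd⟩
      · obtain ⟨w, hw, hd⟩ := mem_zeroMap.1 (h2 hlt)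
        obtain ⟨k, hk⟩ := hf.complete _ _ hw
        exact ⟨k, w, hk, by simp [hd, Nat.ne_of_lt hlt]⟩
    obtain ⟨k, hk⟩ := uniform_bound v
      (fun m k => ∃ w, w ∈ F (seg X k) (Nat.pair a m) ∧ decide (w = 0) = decide (m = v))
      (fun m k k' hkk h => h.elim fun w hw => ⟨w, hf.mono hkk hw.1, hw.2⟩) hall
    refine ⟨k, Nat.mem_rfind.2 ⟨?_, fun {m} hm => ?_⟩⟩
    · obtain ⟨w, hw, hd⟩ := hk v le_rfl
      exact mem_zeroMap.2 ⟨w, hw, by simpa using hd⟩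
    · obtain ⟨w, hw, hd⟩ := hk m (le_of_lt hm)
      refine mem_zeroMap.2 ⟨w, hw, ?_⟩
      rw [hd]
      simp [Nat.ne_of_lt hm]
  use := by
    intro σ a v h
    replace h := Nat.mem_rfind.1 h
    obtain ⟨h1, h2⟩ := h
    have hall : ∀ m, m ≤ v → ∃ Q : Finset ℕ, (∀ q ∈ Q, 2 * q + 1 < σ.length) ∧
        ∀ τ : List Bool, (∀ q ∈ Q, yhat τ q = yhat σ q) →
          ∃ w, w ∈ F τ (Nat.pair a m) ∧ decide (w = 0) = decide (m = v) := by
      intro m hm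
      rcases Nat.eq_or_lt_of_le hm with rfl | hlt
      · obtain ⟨w, hw, hd⟩ := mem_zeroMap.1 h1
        obtain ⟨Q, hQ, hT⟩ := hf.use _ _ _ hw
        exact ⟨Q, hQ, fun τ hτ => ⟨w, hT τ hτ, by simpa using hd⟩⟩
      · obtain ⟨w, hw, hd⟩ := mem_zeroMap.1 (h2 hlt)
        obtain ⟨Q, hQ, hT⟩ := hf.use _ _ _ hw
        exact ⟨Q, hQ, fun τ hτ => ⟨w, hT τ hτ, by rw [hd]; simp [Nat.ne_of_lt hlt]⟩⟩
    obtain ⟨Q, hb, hQ⟩ := uniform_finset v σ.length _ hall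
    refine ⟨Q, hb, fun τ hτ => ?_⟩
    refine Nat.mem_rfind.2 ⟨?_, fun {m} hm => ?_⟩
    · obtain ⟨Q', hs, hT⟩ := hQ v le_rfl
      obtain ⟨w, hw, hd⟩ := hT τ (fun q hq => hτ q (hs hq))
      exact mem_zeroMap.2 ⟨w, hw, by simpa using hd⟩
    · obtain ⟨Q', hs, hT⟩ := hQ m (le_of_lt hm)
      obtain ⟨w, hw, hd⟩ := hT τ (fun q hq => hτ q (hs hq))
      refine mem_zeroMap.2 ⟨w, hw, ?_⟩
      rw [hd]
      simp [Nat.ne_of_lt hm]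

theorem good_of_recursiveIn (X : Set ℕ) {f : ℕ →. ℕ}
    (h : RecursiveInOracle (chi (Yset X)) f) : ∃ F, Approx X f F := by
  induction h with
  | zero => exact ⟨_, approx_zero⟩
  | succ => exact ⟨_, approx_succ⟩
  | left => exact ⟨_, approx_left⟩
  | right => exact ⟨_, approx_right⟩
  | oracle => exact ⟨_, approx_oracle⟩
  | pair _ _ ihf ihg =>
    obtain ⟨F, hF⟩ := ihf
    obtain ⟨G, hG⟩ := ihg
    exact ⟨_, approx_pair hF hG⟩
  | comp _ _ ihf ihg =>
    obtain ⟨F, hF⟩ := ihf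
    obtain ⟨G, hG⟩ := ihg
    exact ⟨_, approx_comp hF hG⟩
  | prec _ _ ihf ihg =>
    obtain ⟨F, hF⟩ := ihf
    obtain ⟨G, hG⟩ := ihg
    exact ⟨_, approx_prec hF hG⟩
  | rfind _ ihf =>
    obtain ⟨F, hF⟩ := ihf
    exact ⟨_, approx_rfind hF⟩

/-! ### Genericity consequences -/

/-- A c.e. predicate given by an unbounded computable search. -/
lemma cepred_exists {p : List Bool → ℕ → Bool} (hp : Computable₂ p) :
    CEPred (fun σ : List Bool => ∃ m, p σ m = true) := by
  refine ⟨fun σ => (Nat.rfind (fun m => Part.some (p σ m))).map fun _ => (), ?_, fun σ => ?_⟩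
  · exact (Partrec.rfind hp.partrec₂).map
      ((Computable.const ()).comp Computable.fst).to₂
  · rw [Part.dom_iff_mem]
    constructor
    · rintro ⟨m, hm⟩
      have : ∃ m, true ∈ Part.some (p σ m) ∧ ∀ k < m, (Part.some (p σ k)).Dom := by
        obtain ⟨m', hm', _⟩ := Nat.rfind_min' (p := fun m => p σ m) hm
        exact ⟨m', by simpa using Nat.rfind_spec hm', fun k _ => trivial⟩
      obtain ⟨m, h1, h2⟩ := this
      have hd : (Nat.rfind fun m => Part.some (p σ m)).Dom :=
        Nat.rfind_dom.2 ⟨m, h1, fun {j} _ => trivial⟩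
      exact ⟨(), Part.mem_map _ (Part.get_mem hd)⟩
    · rintro ⟨u, hu⟩
      obtain ⟨m, hm, -⟩ := (Part.mem_map_iff _).1 hu
      exact ⟨m, by simpa using Nat.rfind_spec hm⟩

/-- From 1-genericity: along any computable unbounded sequence of positions there is a
position outside `X`. -/
lemma generic_bit_false {X : Set ℕ} (hX : OneGeneric X) {g : ℕ → ℕ}
    (hg : Computable g) (hub : ∀ b, ∃ m, b ≤ g m) : ∃ m, g m ∉ X := by
  classical
  set p : List Bool → ℕ → Bool := fun σ m => (decide (g m < σ.length)) && !(σ.getD (g m) false)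
    with hp_def
  have hp : Computable₂ p := by
    have h1 : Computable₂ fun (σ : List Bool) (m : ℕ) => decide (g m < σ.length) :=
      (Primrec.nat_lt.decide.to_comp.comp (hg.comp Computable.snd)
        (Computable.list_length.comp Computable.fst)).to₂
    have h2 : Computable₂ fun (σ : List Bool) (m : ℕ) => !(σ.getD (g m) false) :=
      ((Primrec.not.to_comp).comp
        ((Primrec.list_getD false).to_comp.comp Computable.fst (hg.comp Computable.snd))).to₂
    exact (Primrec.and.to_comp.comp₂ h1 h2)
  have hS := cepred_exists hp
  rcases hX {σ | ∃ m, p σ m = true} hS with ⟨k, hk⟩ | ⟨k, hk⟩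
  · obtain ⟨m, hm⟩ := hk
    rw [hp_def] at hm
    simp only [Bool.and_eq_true, decide_eq_true_eq, Bool.not_eq_true', seg_length] at hm
    obtain ⟨h1, h2⟩ := hm
    rw [seg_getD h1] at h2
    exact ⟨m, by simpa using h2⟩
  · exfalso
    obtain ⟨m, hm⟩ := hub k
    set σ : List Bool := seg X k ++ List.replicate (g m + 1 - k) false with hσ
    refine hk σ ⟨List.replicate (g m + 1 - k) false, rfl⟩ ⟨m, ?_⟩
    have hlen : σ.length = g m + 1 := by simp [hσ]; omega
    have hgd : σ.getD (g m) false = false := by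
      rw [hσ, List.getD_append_right _ _ _ _ (by simpa using hm)]
      simp [List.getD]
    rw [hp_def]
    simp only [Bool.and_eq_true, decide_eq_true_eq, Bool.not_eq_true']
    exact ⟨by omega, hgd⟩

/-! ### `Y ≤_T X` -/

theorem tle_Y_X (X : Set ℕ) : TuringLE (Yset X) X := by
  classical
  have h2 : RecursiveInOracle (chi X) (fun n => ((2 * n + 1 : ℕ) : Part ℕ)) :=
    recIn_of_partrec (Partrec.nat_iff.1 primrec_two_mul_add_one.to_comp.partrec)
  have hmulp : Primrec (fun n : ℕ => (Nat.unpair n).1 * (1 - (Nat.unpair n).2)) :=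
    (Primrec.nat_mul.comp Primrec.fst
      (Primrec.nat_sub.comp (Primrec.const 1) Primrec.snd)).comp Primrec.unpair
  have hmul : RecursiveInOracle (chi X)
      (fun n : ℕ => ((Nat.unpair n).1 * (1 - (Nat.unpair n).2) : ℕ)) :=
    recIn_of_partrec (Partrec.nat_iff.1 hmulp.to_comp.partrec)
  have main := RecursiveInOracle.comp hmul
    (RecursiveInOracle.pair (RecursiveInOracle.comp RecursiveInOracle.oracle RecursiveInOracle.left)
      (RecursiveInOracle.comp RecursiveInOracle.oracle h2))
  refine recIn_of_eq main fun n => ?_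
  show (Nat.pair <$> _ <*> _) >>= _ = chi (Yset X) n
  by_cases hA : (Nat.unpair n).1 ∈ X <;> by_cases hC : 2 * n + 1 ∈ X <;>
    simp [chi, Seq.seq, Yset, hA, hC, Set.mem_setOf_eq, show chi X = fun n => Part.some (if n ∈ X then 1 else 0) from rfl]

/-! ### `X` is c.e. in `Y` -/

theorem cein_Y_X {X : Set ℕ} (hX : OneGeneric X) : CEIn (Yset X) X := by
  classical
  have hsub : RecursiveInOracle (chi (Yset X)) (fun n : ℕ => ((1 - n : ℕ) : Part ℕ)) :=
    recIn_of_partrec (Partrec.nat_iff.1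
      (Primrec.nat_sub.comp (Primrec.const 1) Primrec.id).to_comp.partrec)
  have hg := RecursiveInOracle.comp hsub (RecursiveInOracle.oracle (O := chi (Yset X)))
  refine ⟨_, RecursiveInOracle.rfind hg, ?_⟩
  ext a
  refine Iff.trans ?_ (PFun.mem_dom _ _).symm
  constructor
  · intro ha
    have hub : ∀ b, ∃ m, b ≤ 2 * Nat.pair a m + 1 := by
      intro b
      exact ⟨b, by have := Nat.right_le_pair a b; omega⟩
    have hcomp : Computable fun m : ℕ => 2 * Nat.pair a m + 1 :=
      (Primrec.nat_add.comp
        (Primrec.nat_mul.comp (Primrec.const 2)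
          (Primrec₂.natPair.comp (Primrec.const a) Primrec.id))
        (Primrec.const 1)).to_comp
    obtain ⟨m, hm⟩ := generic_bit_false hX hcomp hub
    have hY : Nat.pair a m ∈ Yset X := ⟨by simpa using ha, by simpa using hm⟩
    have hdom : (Nat.rfind fun n => (fun m => m = 0) <$>
        ((fun n => chi (Yset X) n >>= fun n : ℕ => ((1 - n : ℕ) : Part ℕ)) (Nat.pair a n))).Dom := by
      refine Nat.rfind_dom.2 ?_
      refine ⟨m, by simp [chi, hY], fun {j} _ => by simp [chi]⟩
    exact ⟨_, Part.get_mem hdom⟩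
  · rintro ⟨v, hv⟩
    have hs := Nat.rfind_spec hv
    simp only [chi, Part.bind_some, Part.map_eq_map, Part.mem_map_iff, Part.mem_some_iff] at hs
    obtain ⟨w, hw, hdec⟩ := hs
    by_cases hY : Nat.pair a v ∈ Yset X
    · simpa using hY.1
    · exfalso
      rw [if_neg hY] at hw
      have hw1 : w = 1 := by simpa using hw
      rw [hw1] at hdec
      simp at hdec

/-! ### `X` is not computable from `Y` -/

/-- The set of positions flipped to `true` in the diagonalizing string. -/
def dP (X : Set ℕ) (Q : Finset ℕ) (n : ℕ) : ℕ → Prop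
  | i => i = n ∨ ∃ q ∈ Q, ∃ _h : i = 2 * q + 1, q ∉ Yset X ∧ dP X Q n (Nat.unpair q).1
  termination_by i => i
  decreasing_by
    subst _h
    have := Nat.unpair_left_le q
    omega

lemma dP_iff (X : Set ℕ) (Q : Finset ℕ) (n i : ℕ) :
    dP X Q n i ↔ i = n ∨ ∃ q ∈ Q, ∃ _h : i = 2 * q + 1,
      q ∉ Yset X ∧ dP X Q n (Nat.unpair q).1 := by
  rw [dP]

lemma dP_self (X : Set ℕ) (Q : Finset ℕ) (n : ℕ) : dP X Q n n :=
  (dP_iff X Q n n).2 (Or.inl rfl)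

lemma dP_ge {X : Set ℕ} {Q : Finset ℕ} {n : ℕ} : ∀ i, dP X Q n i → n ≤ i := by
  intro i
  induction i using Nat.strong_induction_on with
  | _ i ih =>
    intro h
    rcases (dP_iff X Q n i).1 h with rfl | ⟨q, hqQ, hi, hqY, hd⟩
    · exact le_rfl
    · have hu := Nat.unpair_left_le q
      have := ih (Nat.unpair q).1 (by omega) hd
      omega

lemma getD_range_map (f : ℕ → Bool) {i u : ℕ} (h : i < u) :
    (((List.range u).map f).getD i false) = f i := by
  simp [List.getD_eq_getElem?_getD, List.getElem?_map, List.getElem?_range, h]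

theorem not_tle_X_Y {X : Set ℕ} (hX : OneGeneric X) : ¬ TuringLE X (Yset X) := by
  classical
  intro hT
  obtain ⟨F, hF⟩ := good_of_recursiveIn X hT
  obtain ⟨c, hc⟩ := Nat.Partrec.Code.exists_code.1 hF.partrec
  -- bridge between the code and the family
  have hbr : ∀ (σ : List Bool) (n : ℕ), eval c (Encodable.encode (σ, n)) = F σ n := by
    intro σ n
    have h1 := congrFun hc (Encodable.encode (σ, n))
    simp only [Encodable.encodek, Part.coe_some, Part.bind_some] at h1
    rw [h1]
    exact Part.map_id' (fun v => by simp [Encodable.encode_nat]) _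
  -- the diagonalizing c.e. set of strings
  set pS : List Bool → ℕ → Bool := fun σ t =>
    decide ((Nat.unpair t).1 < σ.length) &&
      (Option.casesOn
        (Nat.Partrec.Code.evaln (Nat.unpair t).2 c
          (Encodable.encode (σ, (Nat.unpair t).1))) false
        fun v => decide (decide (v = 0) = σ.getD (Nat.unpair t).1 false)) with hpS_def
  have hpS : Computable₂ pS := by
    have h1 : Primrec fun p : List Bool × ℕ => decide ((Nat.unpair p.2).1 < p.1.length) :=
      (Primrec.nat_lt.comp (Primrec.fst.comp (Primrec.unpair.comp Primrec.snd))
        (Primrec.list_length.comp Primrec.fst)).decide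
    have hev : Primrec fun p : List Bool × ℕ =>
        Nat.Partrec.Code.evaln (Nat.unpair p.2).2 c
          (Encodable.encode (p.1, (Nat.unpair p.2).1)) := by
      have harg : Primrec fun p : List Bool × ℕ =>
          (((Nat.unpair p.2).2, c), Encodable.encode (p.1, (Nat.unpair p.2).1)) :=
        ((Primrec.snd.comp (Primrec.unpair.comp Primrec.snd)).pair (Primrec.const c)).pair
          (Primrec.encode.comp
            (Primrec.fst.pair (Primrec.fst.comp (Primrec.unpair.comp Primrec.snd))))
      exact Nat.Partrec.Code.primrec_evaln.comp harg
    have hcase : Primrec fun p : List Bool × ℕ =>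
        (Option.casesOn
          (Nat.Partrec.Code.evaln (Nat.unpair p.2).2 c
            (Encodable.encode (p.1, (Nat.unpair p.2).1))) false
          fun v => decide (decide (v = 0) = p.1.getD (Nat.unpair p.2).1 false) : Bool) := by
      refine Primrec.option_casesOn hev (Primrec.const false) ?_
      have hbit : Primrec fun p : List Bool × ℕ => p.1.getD (Nat.unpair p.2).1 false :=
        (Primrec.list_getD false).comp Primrec.fst
          (Primrec.fst.comp (Primrec.unpair.comp Primrec.snd))
      exact ((Primrec.eq.comp (Primrec.eq.comp Primrec.snd (Primrec.const 0)).decide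
        (hbit.comp Primrec.fst)).decide).to₂
    exact ((Primrec.and.comp h1 hcase).to_comp).to₂
  set S : Set (List Bool) := {σ | ∃ t, pS σ t = true} with hS_def
  have hSce : CEPred (· ∈ S) := cepred_exists hpS
  have hSmem : ∀ σ : List Bool, σ ∈ S ↔
      ∃ n, n < σ.length ∧ ∃ v, v ∈ F σ n ∧ decide (v = 0) = σ.getD n false := by
    intro σ
    constructor
    · rintro ⟨t, ht⟩
      rw [hpS_def] at ht
      simp only [Bool.and_eq_true, decide_eq_true_eq] at ht
      obtain ⟨hlt, hrest⟩ := ht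
      cases hev : Nat.Partrec.Code.evaln (Nat.unpair t).2 c
          (Encodable.encode (σ, (Nat.unpair t).1)) with
      | none => rw [hev] at hrest; simp at hrest
      | some v =>
        rw [hev] at hrest
        simp only [decide_eq_true_eq] at hrest
        refine ⟨(Nat.unpair t).1, hlt, v, ?_, by simpa using hrest⟩
        rw [← hbr]
        exact Nat.Partrec.Code.evaln_sound (by rw [hev]; simp)
    · rintro ⟨n, hn, v, hv, hd⟩
      rw [← hbr] at hv
      obtain ⟨s, hs⟩ := Nat.Partrec.Code.evaln_complete.1 hv
      refine ⟨Nat.pair n s, ?_⟩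
      rw [hpS_def]
      simp only [Nat.unpair_pair, Bool.and_eq_true, decide_eq_true_eq]
      refine ⟨hn, ?_⟩
      rw [show Nat.Partrec.Code.evaln s c (Encodable.encode (σ, n)) = some v from
        Option.mem_def.1 hs]
      simpa using hd
  rcases hX S hSce with ⟨k, hk⟩ | ⟨k, hk⟩
  · -- met: contradiction with soundness
    obtain ⟨n, hn, v, hv, hd⟩ := (hSmem _).1 hk
    have hvX := hF.sound _ _ _ hv
    have hlen : n < k := by simpa using hn
    rw [seg_getD hlen] at hd
    by_cases hnX : n ∈ X
    · have : v = 1 := by simpa [chi, hnX] using hvX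
      rw [this] at hd
      simp [hnX] at hd
    · have : v = 0 := by simpa [chi, hnX] using hvX
      rw [this] at hd
      simp [hnX] at hd
  · -- avoided: construct the diagonalizing string
    obtain ⟨m0, hm0⟩ := generic_bit_false hX
      (g := fun m => 2 * (m + k + 1))
      ((Primrec.nat_mul.comp (Primrec.const 2)
        (Primrec.nat_add.comp (Primrec.nat_add.comp Primrec.id (Primrec.const k))
          (Primrec.const 1))).to_comp)
      (fun b => ⟨b, by show b ≤ 2 * (b + k + 1); omega⟩)
    set n := 2 * (m0 + k + 1) with hn_def
    have hnX : n ∉ X := hm0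
    have hnk : k < n := by omega
    have h0 : (0 : ℕ) ∈ chi X n := by simp [chi, hnX]
    obtain ⟨k₀, hk₀⟩ := hF.complete n 0 h0
    obtain ⟨Q, hQb, hQt⟩ := hF.use _ _ _ hk₀
    have hQb' : ∀ q ∈ Q, 2 * q + 1 < k₀ := fun q hq => by simpa using hQb q hq
    set u := max k₀ (n + 1) with hu_def
    set τ : List Bool := (List.range u).map (fun i => decide (i ∈ X ∨ dP X Q n i)) with hτ_def
    have hτlen : τ.length = u := by simp [hτ_def]
    have hτget : ∀ i, i < u → τ.getD i false = decide (i ∈ X ∨ dP X Q n i) := by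
      intro i hi
      rw [hτ_def]
      exact getD_range_map _ hi
    -- agreement on the use set
    have hagree : ∀ q ∈ Q, yhat τ q = yhat (seg X k₀) q := by
      intro q hq
      have h2q : 2 * q + 1 < k₀ := hQb' q hq
      have h2qu : 2 * q + 1 < u := lt_of_lt_of_le h2q (le_max_left _ _)
      have haqu : (Nat.unpair q).1 < u := by
        have := Nat.unpair_left_le q; omega
      rw [yhat_seg h2q, yhat, yhatO, if_pos (by simpa [hτlen] using h2qu),
        hτget _ haqu, hτget _ h2qu]
      by_cases hY : q ∈ Yset X
      · obtain ⟨h1, h2⟩ := hY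
        have hnd : ¬ dP X Q n (2 * q + 1) := by
          intro hd
          rcases (dP_iff X Q n (2 * q + 1)).1 hd with heq | ⟨q', hq'Q, hq', hq'Y, _⟩
          · omega
          · have : q' = q := by omega
            subst this
            exact hq'Y ⟨h1, h2⟩
        simp [chi, h1, h2, hnd, Yset, Set.mem_setOf_eq]
      · -- q ∉ Yset X : both sides give 0
        have hcond : ¬ ((((Nat.unpair q).1 ∈ X ∨ dP X Q n (Nat.unpair q).1)) ∧
            ¬ (2 * q + 1 ∈ X ∨ dP X Q n (2 * q + 1))) := by
          rintro ⟨hl, hr⟩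
          rcases hl with hl | hl
          · -- (unpair q).1 ∈ X; since q ∉ Yset X, 2q+1 ∈ X
            rw [Yset, Set.mem_setOf_eq, not_and_or, not_not] at hY
            rcases hY with hY | hY
            · exact hY hl
            · exact hr (Or.inl hY)
          · exact hr (Or.inr ((dP_iff X Q n (2 * q + 1)).2
              (Or.inr ⟨q, hq, rfl, hY, hl⟩)))
        rw [chi]
        rw [if_neg hY]
        by_cases hl : (Nat.unpair q).1 ∈ X ∨ dP X Q n (Nat.unpair q).1 <;>
          by_cases hr : 2 * q + 1 ∈ X ∨ dP X Q n (2 * q + 1) <;>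
            simp [hl, hr] <;> tauto
    have h0τ : (0 : ℕ) ∈ F τ n := hQt τ hagree
    have hτS : τ ∈ S := by
      refine (hSmem τ).2 ⟨n, by rw [hτlen]; omega, 0, h0τ, ?_⟩
      rw [hτget n (by omega)]
      simp [hnX, dP_self]
    -- τ extends seg X k
    have hpre : seg X k <+: τ := by
      have htake : τ.take k = seg X k := by
        rw [hτ_def, ← List.map_take, List.take_range,
          Nat.min_eq_left (by omega : k ≤ u), seg]
        apply List.map_congr_left
        intro i hi
        have hik : i < k := List.mem_range.1 hi
        have : ¬ dP X Q n i := fun hd => by have := dP_ge i hd; omega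
        simp [this]
      rw [← htake]
      exact List.take_prefix _ _
    exact hk τ hpre hτS

end OGCEA

/-- Every 1-generic real is relatively c.e.a. -/
theorem oneGeneric_relatively_cea (X : Set ℕ) (hX : OneGeneric X) :
    ∃ Y : Set ℕ, (TuringLE Y X ∧ ¬ TuringLE X Y) ∧ CEIn Y X := by
  exact ⟨OGCEA.Yset X, ⟨OGCEA.tle_Y_X X, OGCEA.not_tle_X_Y hX⟩, OGCEA.cein_Y_X hX⟩
end

section
/- There is no nonempty Π⁰₁ class all of whose members are 1-generic. -/
open Classical

/-- A computable predicate is c.e. -/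
lemma cePred_of_computablePred {α : Type} [Primcodable α] {p : α → Prop}
    (h : ComputablePred p) : CEPred p := by
  refine ⟨fun a => Part.assert (p a) fun _ => Part.some (), h.to_re, fun a => ?_⟩
  exact ⟨fun h => ⟨h, trivial⟩, fun ⟨h, _⟩ => h⟩

lemma seg_length (X : Set ℕ) (k : ℕ) : (seg X k).length = k := by
  simp [seg]

lemma seg_prefix (X : Set ℕ) {a b : ℕ} (h : a ≤ b) : seg X a <+: seg X b := by
  have : seg X a = (seg X b).take a := by
    simp [seg, ← List.map_take, List.take_range, Nat.min_eq_left h]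
  rw [this]
  exact List.take_prefix _ _

lemma seg_getD (X : Set ℕ) {k n : ℕ} (h : n < k) :
    (seg X k).getD n false = decide (n ∈ X) := by
  simp [seg, List.getD, h, List.getElem_range]

/-- There is no nonempty Π⁰₁ class all of whose members are 1-generic. -/
theorem no_pi01_class_of_oneGeneric :
    ¬ ∃ T : Set (List Bool), ComputableTree T ∧ (∃ X : Set ℕ, IsPath T X) ∧
      ∀ X : Set ℕ, IsPath T X → OneGeneric X := by
  rintro ⟨T, ⟨Tcl, Tcomp⟩, ⟨X, hX⟩, hgen⟩
  have hS1 : CEPred (· ∈ {σ : List Bool | σ ∉ T}) :=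
    cePred_of_computablePred Tcomp.not
  rcases hgen X hX {σ : List Bool | σ ∉ T} hS1 with ⟨k, hk⟩ | ⟨k, hk⟩
  · exact hk (hX k)
  -- every extension of `L := seg X k` is in `T`
  set L : List Bool := seg X k with hL
  set g : ℕ → Bool := fun n => L.getD n false with hg
  set F : ℕ → List Bool := fun m => (List.range m).map g with hF
  set Y : Set ℕ := {n | g n = true} with hY
  have hsegY : ∀ m, seg Y m = F m := by
    intro m
    simp only [seg, hF]
    refine List.map_congr_left fun n _ => ?_
    by_cases hn : g n = true
    · rw [hn]; exact @decide_eq_true _ (propDecidable _) hn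
    · rw [Bool.eq_false_iff.2 hn]; exact @decide_eq_false _ (propDecidable _) hn
  have hFsucc : ∀ m, F (m + 1) = F m ++ [g m] := by
    intro m; simp [hF, List.range_succ]
  have hFlen : ∀ m, (F m).length = m := by intro m; simp [hF]
  -- Y agrees with X below k, so seg Y m = seg X m for m ≤ k
  have hseg_eq : ∀ m, m ≤ k → seg Y m = seg X m := by
    intro m hm
    simp only [seg]
    refine List.map_congr_left fun n hn => ?_
    have hnk : n < k := lt_of_lt_of_le (List.mem_range.1 hn) hm
    have : n ∈ Y ↔ n ∈ X := by
      rw [hY]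
      simp only [Set.mem_setOf_eq, hg, hL, seg_getD X hnk, decide_eq_true_eq]
    exact decide_eq_decide.2 this
  -- Y is a path through T
  have hYpath : IsPath T Y := by
    intro m
    rcases le_or_gt m k with hmk | hkm
    · rw [hseg_eq m hmk]; exact hX m
    · have hpre : seg X k <+: seg Y m := by
        rw [← hseg_eq k le_rfl]
        exact seg_prefix Y hkm.le
      exact not_not.1 (hk _ hpre)
  -- the set of strings differing from Y is computable
  have hFprim : Primrec F := by
    refine Primrec.list_map Primrec.list_range ?_
    exact ((Primrec.list_getD false).comp (Primrec.const L) Primrec.snd).to₂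
  have hS2comp : ComputablePred
      (· ∈ {τ : List Bool | ¬ τ = F τ.length}) := by
    rw [ComputablePred.computable_iff]
    refine ⟨fun τ => decide (¬ τ = F τ.length), ?_, ?_⟩
    · exact Primrec.to_comp
        (PrimrecPred.not (p := fun τ : List Bool => τ = F τ.length)
          (Primrec.eq.comp Primrec.id (hFprim.comp Primrec.list_length))).decide
    · funext τ; simp [Set.mem_setOf_eq]
  rcases hgen Y hYpath {τ : List Bool | ¬ τ = F τ.length}
      (cePred_of_computablePred hS2comp) with ⟨m, hm⟩ | ⟨m, hm⟩
  · apply hm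
    rw [hsegY m, hFlen m]
  · set τ : List Bool := F m ++ [!(g m)] with hτ
    have hpre : seg Y m <+: τ := by rw [hsegY m]; exact ⟨[!(g m)], rfl⟩
    have := hm τ hpre
    simp only [Set.mem_setOf_eq, not_not] at this
    rw [hτ] at this
    have hlen : (F m ++ [!(g m)]).length = m + 1 := by
      simp [hFlen m]
    rw [hlen, hFsucc m] at this
    have : (!(g m)) = g m := by
      have := List.append_cancel_left this
      exact List.head_eq_of_cons_eq this
    exact Bool.not_ne_self (g m) this
end
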